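/- Let $d\ge 2$, $m=\lfloor d/2\rfloor$, and $k\ge d$. Define $\phi_i(d,k)=\sum_{j=0}^{m}\left[\binom{j}{d-1-i}+\binom{d-j}{d-1-i}\right]\binom{k-d+j}{j} - [d\text{ even}]\binom{m}{2m-1-i}\binom{k-m}{m}$. Then for $0\le i\le m-1$, $\phi_i(d,k)=\binom{k+1}{i+1}$. -/

import Mathlib

/-- Integer binomial coefficient, zero outside the range `0 ≤ b ≤ a`. -/
def ch (a b : ℤ) : ℤ := if 0 ≤ b ∧ b ≤ a then ((a.toNat).choose b.toNat : ℤ) else 0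

lemma ch_coe (a b : ℕ) : ch (a : ℤ) (b : ℤ) = (a.choose b : ℤ) := by
  unfold ch
  split_ifs with h
  · simp
  · have hab : a < b := by omega
    rw [Nat.choose_eq_zero_of_lt hab, Nat.cast_zero]

lemma hockey (r n : ℕ) : ∑ j ∈ Finset.range (n+1), (r+j).choose j = (r+n+1).choose n := by
  induction n with
  | zero => simp
  | succ n ih =>
      rw [Finset.sum_range_succ, ih]
      rw [show r+(n+1)+1 = (r+n+1)+1 from by ring, Nat.choose_succ_succ,
        show r+(n+1) = r+n+1 from by ring]

lemma key (s : ℕ) : ∀ r n : ℕ, ∑ p ∈ Finset.HasAntidiagonal.antidiagonal n,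
    (r+p.1).choose p.1 * (s+p.2).choose p.2 = (r+s+n+1).choose n := by
  induction s with
  | zero =>
      intro r n
      simp only [Nat.zero_add, Nat.choose_self, mul_one]
      rw [Finset.Nat.sum_antidiagonal_eq_sum_range_succ_mk]
      simpa using hockey r n
  | succ s ih =>
      intro r n
      induction n with
      | zero => simp
      | succ n ihn =>
          have pas : ∀ p : ℕ × ℕ, (r+p.1).choose p.1 * (s+1+(p.2+1)).choose (p.2+1)
              = (r+p.1).choose p.1 * (s+1+p.2).choose p.2
                + (r+p.1).choose p.1 * (s+(p.2+1)).choose (p.2+1) := by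
            intro p
            rw [show s+1+(p.2+1) = (s+1+p.2)+1 from by ring, Nat.choose_succ_succ, Nat.mul_add,
              show s+1+p.2 = s+(p.2+1) from by ring]
          have e1 : ∑ p ∈ Finset.HasAntidiagonal.antidiagonal (n+1), (r+p.1).choose p.1 * (s+1+p.2).choose p.2
              = (r+(n+1)).choose (n+1)
                + ∑ p ∈ Finset.HasAntidiagonal.antidiagonal n, (r+p.1).choose p.1 * (s+1+(p.2+1)).choose (p.2+1) := by
            rw [Finset.Nat.sum_antidiagonal_succ'
              (f := fun p => (r+p.1).choose p.1 * (s+1+p.2).choose p.2)]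
            simp
          have e2 : ∑ p ∈ Finset.HasAntidiagonal.antidiagonal (n+1), (r+p.1).choose p.1 * (s+p.2).choose p.2
              = (r+(n+1)).choose (n+1)
                + ∑ p ∈ Finset.HasAntidiagonal.antidiagonal n, (r+p.1).choose p.1 * (s+(p.2+1)).choose (p.2+1) := by
            rw [Finset.Nat.sum_antidiagonal_succ'
              (f := fun p => (r+p.1).choose p.1 * (s+p.2).choose p.2)]
            simp
          rw [e1, Finset.sum_congr rfl (fun p _ => pas p), Finset.sum_add_distrib]
          have h3 := ih r (n+1)
          rw [e2] at h3
          have hpas : (r+(s+1)+(n+1)+1).choose (n+1)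
              = (r+(s+1)+n+1).choose n + (r+s+(n+1)+1).choose (n+1) := by
            rw [show r+(s+1)+(n+1)+1 = (r+(s+1)+n+1)+1 from by ring, Nat.choose_succ_succ,
              show r+s+(n+1)+1 = r+(s+1)+n+1 from by ring]
          omega

lemma key' (r s n : ℕ) :
    ∑ j ∈ Finset.range (n+1), (r+j).choose j * (s+(n-j)).choose (n-j) = (r+s+n+1).choose n := by
  rw [← Finset.Nat.sum_antidiagonal_eq_sum_range_succ
    (f := fun a b => (r+a).choose a * (s+b).choose b)]
  exact key s r n

lemma main_nat (d m k i : ℕ) (hd2 : 2 ≤ d) (hm : m = d / 2) (hk : d ≤ k) (hi : i + 1 ≤ m) :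
    ∑ j ∈ Finset.range (m+1), (j.choose (d-1-i) + (d-j).choose (d-1-i)) * (k-d+j).choose j
      = (k+1).choose (i+1) + (if Even d then 1 else 0) * m.choose (2*m-1-i) * (k-m).choose m := by
  have hm1 : 1 ≤ m := by omega
  simp only [Nat.even_iff]
  simp only [Nat.add_mul]
  rw [Finset.sum_add_distrib]
  have hS1 : ∑ j ∈ Finset.range (m+1), j.choose (d-1-i) * (k-d+j).choose j
      = (if d % 2 = 0 then 1 else 0) * m.choose (2*m-1-i) * (k-m).choose m := by
    by_cases hc : d % 2 = 0 ∧ i + 1 = m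
    · obtain ⟨hpar, hieq⟩ := hc
      have hd2m : d = 2 * m := by omega
      rw [Finset.sum_range_succ]
      have hz : ∀ j ∈ Finset.range m, j.choose (d-1-i) * (k-d+j).choose j = 0 := by
        intro j hj
        rw [Finset.mem_range] at hj
        rw [Nat.choose_eq_zero_of_lt (by omega), zero_mul]
      rw [Finset.sum_eq_zero hz, zero_add]
      rw [if_pos hpar, show d-1-i = m from by omega, show 2*m-1-i = m from by omega,
        Nat.choose_self, show k-d+m = k-m from by omega]
    · have hz : ∀ j ∈ Finset.range (m+1), j.choose (d-1-i) * (k-d+j).choose j = 0 := by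
        intro j hj
        rw [Finset.mem_range] at hj
        rw [Nat.choose_eq_zero_of_lt (by omega), zero_mul]
      rw [Finset.sum_eq_zero hz]
      by_cases hpar : d % 2 = 0
      · rw [if_pos hpar, Nat.choose_eq_zero_of_lt (by omega)]
        ring
      · rw [if_neg hpar]; ring
  rw [hS1]
  have hS2 : ∑ j ∈ Finset.range (m+1), (d-j).choose (d-1-i) * (k-d+j).choose j
      = (k+1).choose (i+1) := by
    have hsub : Finset.range (i+2) ⊆ Finset.range (m+1) := by
      apply Finset.range_subset_range.2; omega
    rw [← Finset.sum_subset hsub (by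
      intro j hj hj2
      rw [Finset.mem_range] at hj hj2
      rw [Nat.choose_eq_zero_of_lt (by omega), zero_mul])]
    have hcg : ∀ j ∈ Finset.range (i+2),
        (d-j).choose (d-1-i) * (k-d+j).choose j
          = ((k-d)+j).choose j * ((d-1-i)+((i+1)-j)).choose ((i+1)-j) := by
      intro j hj
      rw [Finset.mem_range] at hj
      rw [show (d-1-i)+((i+1)-j) = d-j from by omega]
      rw [show (i+1)-j = (d-j)-(d-1-i) from by omega, Nat.choose_symm (by omega)]
      ring
    rw [Finset.sum_congr rfl hcg, key' (k-d) (d-1-i) (i+1),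
      show (k-d)+(d-1-i)+(i+1)+1 = k+1 from by omega]
  rw [hS2]
  omega

/-- For `d ≥ 2`, `m = ⌊d/2⌋`, `k ≥ d` and `0 ≤ i ≤ m-1`, the number of `i`-faces
of the cyclic `d`-polytope with `k+1` vertices,
`φ_i(d,k) = ∑_{j=0}^m [C(j,d-1-i) + C(d-j,d-1-i)] C(k-d+j,j) - [d even] C(m,2m-1-i) C(k-m,m)`,
simplifies to `C(k+1, i+1)`. -/
theorem phi_simplification (d m k i : ℕ) (hd2 : 2 ≤ d) (hm : m = d / 2)
    (hk : d ≤ k) (hi : i ≤ m - 1) :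
    (∑ j ∈ Finset.range (m + 1),
        (ch (j : ℤ) ((d : ℤ) - 1 - i) + ch ((d : ℤ) - j) ((d : ℤ) - 1 - i)) *
          ch ((k : ℤ) - d + j) (j : ℤ))
      - (if Even d then 1 else 0) * ch (m : ℤ) (2 * (m : ℤ) - 1 - i) * ch ((k : ℤ) - m) (m : ℤ)
      = ch ((k : ℤ) + 1) ((i : ℤ) + 1) := by
  have hm1 : 1 ≤ m := by omega
  have hi' : i + 1 ≤ m := by omega
  have hmd : m ≤ d := by omega
  have hid : i + 1 ≤ d := by omega
  have c1 : ∀ j ∈ Finset.range (m+1),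
      (ch (j : ℤ) ((d : ℤ) - 1 - i) + ch ((d : ℤ) - j) ((d : ℤ) - 1 - i)) *
          ch ((k : ℤ) - d + j) (j : ℤ)
        = (((j.choose (d-1-i) + (d-j).choose (d-1-i)) * (k-d+j).choose j : ℕ) : ℤ) := by
    intro j hj
    rw [Finset.mem_range] at hj
    rw [show ((d:ℤ)-1-i) = ((d-1-i : ℕ):ℤ) from by omega,
      show ((d:ℤ)-j) = ((d-j : ℕ):ℤ) from by omega,
      show ((k:ℤ)-d+j) = ((k-d+j : ℕ):ℤ) from by omega,
      ch_coe, ch_coe, ch_coe]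
    push_cast
    ring
  rw [Finset.sum_congr rfl c1, ← Nat.cast_sum]
  rw [show (2*(m:ℤ)-1-i) = ((2*m-1-i : ℕ):ℤ) from by omega,
    show ((k:ℤ)-m) = ((k-m : ℕ):ℤ) from by omega,
    show ((k:ℤ)+1) = ((k+1 : ℕ):ℤ) from by omega,
    show ((i:ℤ)+1) = ((i+1 : ℕ):ℤ) from by omega,
    ch_coe, ch_coe, ch_coe]
  rw [show ((if Even d then (1:ℤ) else 0)) = ((if Even d then 1 else 0 : ℕ) : ℤ) from by
    split_ifs <;> simp]
  rw [main_nat d m k i hd2 hm hk hi']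
  push_cast
  ring
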